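/- Let m, n be positive integers with n > 1, let x_1, …, x_n ∈ ℝ^m, and let ε > 0. Then the ε-Frobenius entropy is a strictly increasing function of the time index, i.e., η_{j+1} > η_j for every j ∈ {1,…,n−1}, if and only if ‖x_j − x_k‖ ≥ ε for all distinct indices j, k ∈ {1,…,n}. -/

import Mathlib

/-- The recurrence count `N_j`: the number of pairs `(i,k) ∈ {1,…,j}²` with
`‖x_i − x_k‖ < ε`. -/
noncomputable def recCount {m : ℕ} (x : ℕ → EuclideanSpace ℝ (Fin m)) (ε : ℝ) (j : ℕ) : ℕ :=
  (((Finset.Icc 1 j) ×ˢ (Finset.Icc 1 j)).filter (fun p => ‖x p.1 - x p.2‖ < ε)).card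

/-- The ε-Frobenius potential `v_j = N_j / j²`. -/
noncomputable def frobPot {m : ℕ} (x : ℕ → EuclideanSpace ℝ (Fin m)) (ε : ℝ) (j : ℕ) : ℝ :=
  (recCount x ε j : ℝ) / (j : ℝ) ^ 2

/-- The ε-Frobenius entropy `η_j = −log v_j`. -/
noncomputable def frobEnt {m : ℕ} (x : ℕ → EuclideanSpace ℝ (Fin m)) (ε : ℝ) (j : ℕ) : ℝ :=
  - Real.log (frobPot x ε j)

lemma diag_subset {m : ℕ} (x : ℕ → EuclideanSpace ℝ (Fin m)) {ε : ℝ} (hε : 0 < ε) (j : ℕ) :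
    (Finset.Icc 1 j).image (fun i => (i, i)) ⊆
      (((Finset.Icc 1 j) ×ˢ (Finset.Icc 1 j)).filter (fun p => ‖x p.1 - x p.2‖ < ε)) := by
  intro p hp
  simp only [Finset.mem_image] at hp
  obtain ⟨i, hi, rfl⟩ := hp
  simp [Finset.mem_filter, Finset.mem_product, hi, hε]

lemma recCount_ge {m : ℕ} (x : ℕ → EuclideanSpace ℝ (Fin m)) {ε : ℝ} (hε : 0 < ε) (j : ℕ) :
    j ≤ recCount x ε j := by
  have h := Finset.card_le_card (diag_subset x hε j)
  rwa [Finset.card_image_of_injective _ (fun a b h => by simpa using congrArg Prod.fst h),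
    Nat.card_Icc, Nat.add_sub_cancel] at h

lemma recCount_eq {m : ℕ} (x : ℕ → EuclideanSpace ℝ (Fin m)) {ε : ℝ} (hε : 0 < ε) (j : ℕ)
    (h : ∀ a b : ℕ, 1 ≤ a → a ≤ j → 1 ≤ b → b ≤ j → a ≠ b → ε ≤ ‖x a - x b‖) :
    recCount x ε j = j := by
  have : (((Finset.Icc 1 j) ×ˢ (Finset.Icc 1 j)).filter (fun p => ‖x p.1 - x p.2‖ < ε)) =
      (Finset.Icc 1 j).image (fun i => (i, i)) := by
    apply Finset.Subset.antisymm _ (diag_subset x hε j)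
    intro p hp
    simp only [Finset.mem_filter, Finset.mem_product, Finset.mem_Icc] at hp
    obtain ⟨p1, p2⟩ := p
    obtain ⟨⟨⟨h1, h2⟩, h3, h4⟩, h5⟩ := hp
    by_cases heq : p1 = p2
    · subst heq
      simp only [Finset.mem_image, Finset.mem_Icc]
      exact ⟨p1, ⟨h1, h2⟩, rfl⟩
    · exact absurd (h p1 p2 h1 h2 h3 h4 heq) (not_le.mpr h5)
  rw [recCount, this, Finset.card_image_of_injective _
    (fun a b h => by simpa using (congrArg Prod.fst h)), Nat.card_Icc, Nat.add_sub_cancel]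

lemma recCount_ge_add_two {m : ℕ} (x : ℕ → EuclideanSpace ℝ (Fin m)) {ε : ℝ} (hε : 0 < ε)
    {j a b : ℕ} (ha1 : 1 ≤ a) (ha2 : a ≤ j) (hb1 : 1 ≤ b) (hb2 : b ≤ j) (hab : a ≠ b)
    (hclose : ‖x a - x b‖ < ε) : j + 2 ≤ recCount x ε j := by
  show j + 2 ≤ (((Finset.Icc 1 j) ×ˢ (Finset.Icc 1 j)).filter (fun p => ‖x p.1 - x p.2‖ < ε)).card
  set S := (((Finset.Icc 1 j) ×ˢ (Finset.Icc 1 j)).filter (fun p => ‖x p.1 - x p.2‖ < ε)) with hS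
  have hmem1 : (a, b) ∈ S := by
    simp [hS, Finset.mem_filter, Finset.mem_product, Finset.mem_Icc, ha1, ha2, hb1, hb2, hclose]
  have hmem2 : (b, a) ∈ S := by
    have : ‖x b - x a‖ < ε := by rwa [norm_sub_rev]
    simp [hS, Finset.mem_filter, Finset.mem_product, Finset.mem_Icc, ha1, ha2, hb1, hb2, this]
  have hsub : insert (a, b) (insert (b, a) ((Finset.Icc 1 j).image (fun i => (i, i)))) ⊆ S := by
    intro p hp
    rcases Finset.mem_insert.mp hp with rfl | hp
    · exact hmem1
    rcases Finset.mem_insert.mp hp with rfl | hp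
    · exact hmem2
    · exact diag_subset x hε j hp
  have hcard := Finset.card_le_card hsub
  have hnd1 : (a, b) ∉ insert (b, a) ((Finset.Icc 1 j).image (fun i => (i, i))) := by
    simp only [Finset.mem_insert, Finset.mem_image, Prod.mk.injEq, not_or, not_exists]
    exact ⟨fun ⟨h1, h2⟩ => hab h1, fun i ⟨_, h1, h2⟩ => hab (h1.symm.trans h2)⟩
  have hnd2 : (b, a) ∉ (Finset.Icc 1 j).image (fun i => (i, i)) := by
    simp only [Finset.mem_image, Prod.mk.injEq, not_exists]
    exact fun i ⟨_, h1, h2⟩ => hab (h2.symm.trans h1)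
  rw [Finset.card_insert_of_notMem hnd1, Finset.card_insert_of_notMem hnd2,
    Finset.card_image_of_injective _ (fun a b h => by simpa using (congrArg Prod.fst h)),
    Nat.card_Icc, Nat.add_sub_cancel] at hcard
  omega

lemma frobEnt_eq_log {m : ℕ} (x : ℕ → EuclideanSpace ℝ (Fin m)) {ε : ℝ} (j : ℕ)
    (hj : 1 ≤ j) (h : recCount x ε j = j) : frobEnt x ε j = Real.log j := by
  have hjpos : (0:ℝ) < j := by exact_mod_cast hj
  rw [frobEnt, frobPot, h]
  rw [show (j:ℝ) / (j:ℝ)^2 = ((j:ℝ))⁻¹ by field_simp, Real.log_inv, neg_neg]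

/-- the ε-Frobenius entropy is strictly increasing in the time index iff all
pairwise distances between distinct snapshots are at least ε. -/
theorem stmt_0 (m n : ℕ) (hm : 0 < m) (hn : 1 < n)
    (x : ℕ → EuclideanSpace ℝ (Fin m)) (ε : ℝ) (hε : 0 < ε) :
    (∀ j : ℕ, 1 ≤ j → j + 1 ≤ n → frobEnt x ε j < frobEnt x ε (j + 1)) ↔
      (∀ j k : ℕ, 1 ≤ j → j ≤ n → 1 ≤ k → k ≤ n → j ≠ k → ε ≤ ‖x j - x k‖) := by
  constructor
  · intro h
    by_contra hcon
    push_neg at hcon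
    obtain ⟨a, b, ha1, ha2, hb1, hb2, hab, hclose⟩ := hcon
    -- least J with a close distinct pair in [1,J]
    have hP : ∃ J, ∃ a b : ℕ, 1 ≤ a ∧ a ≤ J ∧ 1 ≤ b ∧ b ≤ J ∧ a ≠ b ∧ ‖x a - x b‖ < ε :=
      ⟨n, a, b, ha1, ha2, hb1, hb2, hab, hclose⟩
    classical
    obtain ⟨a', b', ha'1, ha'2, hb'1, hb'2, hab', hclose'⟩ := Nat.find_spec hP
    have hJn : Nat.find hP ≤ n := Nat.find_le ⟨a, b, ha1, ha2, hb1, hb2, hab, hclose⟩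
    have hJ2 : 2 ≤ Nat.find hP := by
      by_contra hlt
      push_neg at hlt
      omega
    obtain ⟨j0, hJ⟩ : ∃ j0, Nat.find hP = j0 + 1 := ⟨Nat.find hP - 1, by omega⟩
    rw [hJ] at ha'2 hb'2 hJn
    have hj01 : 1 ≤ j0 := by omega
    have hprev : ¬ (∃ a b : ℕ, 1 ≤ a ∧ a ≤ j0 ∧ 1 ≤ b ∧ b ≤ j0 ∧ a ≠ b ∧ ‖x a - x b‖ < ε) :=
      Nat.find_min hP (by omega)
    push_neg at hprev
    have hN0 : recCount x ε j0 = j0 :=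
      recCount_eq x hε j0 (fun a b h1 h2 h3 h4 h5 => hprev a b h1 h2 h3 h4 h5)
    have hN1 : j0 + 1 + 2 ≤ recCount x ε (j0 + 1) :=
      recCount_ge_add_two x hε ha'1 ha'2 hb'1 hb'2 hab' hclose'
    -- show frobEnt (j0+1) ≤ frobEnt j0, contradiction with h
    have hlt := h j0 hj01 (by omega)
    have hj0pos : (0:ℝ) < j0 := by exact_mod_cast hj01
    have hv0 : frobPot x ε j0 = ((j0:ℝ))⁻¹ := by
      rw [frobPot, hN0]; field_simp
    have hv1 : ((j0:ℝ) + 3) / ((j0:ℝ) + 1)^2 ≤ frobPot x ε (j0 + 1) := by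
      rw [frobPot]
      have hc : ((j0:ℝ) + 3) ≤ (recCount x ε (j0+1) : ℝ) := by exact_mod_cast hN1
      push_cast
      gcongr
    have hkey : frobPot x ε j0 ≤ frobPot x ε (j0 + 1) := by
      refine le_trans ?_ hv1
      rw [hv0, inv_eq_one_div, div_le_div_iff₀ hj0pos (by positivity)]
      have h1j : (1:ℝ) ≤ (j0:ℝ) := by exact_mod_cast hj01
      nlinarith [h1j]
    have : frobEnt x ε (j0 + 1) ≤ frobEnt x ε j0 := by
      rw [frobEnt, frobEnt]
      have h0 : 0 < frobPot x ε j0 := by rw [hv0]; positivity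
      exact neg_le_neg (Real.log_le_log h0 hkey)
    linarith
  · intro h j hj1 hjn
    have hNj : recCount x ε j = j :=
      recCount_eq x hε j (fun a b h1 h2 h3 h4 h5 =>
        h a b h1 (by omega) h3 (by omega) h5)
    have hNj1 : recCount x ε (j + 1) = j + 1 :=
      recCount_eq x hε (j + 1) (fun a b h1 h2 h3 h4 h5 =>
        h a b h1 (by omega) h3 (by omega) h5)
    rw [frobEnt_eq_log x j hj1 hNj, frobEnt_eq_log x (j+1) (by omega) hNj1]
    exact Real.log_lt_log (by exact_mod_cast hj1) (by exact_mod_cast Nat.lt_succ_self j)
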